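/- Let D be an integral domain, ⋆ a semistar operation on D, ι: D ↪ D^⋆ the canonical embedding, and ⋆_ι the semistar operation on D^⋆ defined by E^{⋆_ι} := E^⋆ for E ∈ F̄(D^⋆). Then D is ⋆-coherent if and only if D^⋆ is ⋆_ι-coherent; moreover, if D is ⋆-extracoherent, then D^⋆ is ⋆_ι-extracoherent. -/

import Mathlib

open Submodule

namespace Semistar

/-- A semistar operation on an integral domain `D` with quotient field `K`:
a map on `D`-submodules of `K` satisfying the semistar axioms on nonzero submodules. -/
structure SemistarOp (D K : Type*) [CommRing D] [Field K] [Algebra D K] where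
  star : Submodule D K → Submodule D K
  star_smul_mul : ∀ x : K, x ≠ 0 → ∀ E : Submodule D K, E ≠ ⊥ →
    star (span D {x} * E) = span D {x} * star E
  star_mono : ∀ E F : Submodule D K, E ≠ ⊥ → F ≠ ⊥ → E ≤ F → star E ≤ star F
  le_star : ∀ E : Submodule D K, E ≠ ⊥ → E ≤ star E
  star_star : ∀ E : Submodule D K, E ≠ ⊥ → star (star E) = star E

variable {D K : Type*} [CommRing D] [Field K] [Algebra D K]

/-- The finite-type semistar operation `⋆_f` associated to `⋆`. -/
def finStar (t : Submodule D K → Submodule D K) : Submodule D K → Submodule D K :=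
  fun E => ⨆ F ∈ {F : Submodule D K | F ≠ ⊥ ∧ F.FG ∧ F ≤ E}, t F

/-- The image in `K` of an ideal of `D`. -/
def idealToK (I : Ideal D) : Submodule D K :=
  Submodule.map (Algebra.linearMap D K) I

/-- `I` is a quasi-`⋆`-ideal: a nonzero ideal of `D` with `I^⋆ ∩ D = I`. -/
def IsQuasiIdeal (t : Submodule D K → Submodule D K) (I : Ideal D) : Prop :=
  I ≠ ⊥ ∧ t (idealToK I) ⊓ 1 = idealToK I

/-- `M` is a quasi-`⋆`-maximal ideal: maximal among quasi-`⋆`-ideals. -/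
def IsQuasiMaximal (t : Submodule D K → Submodule D K) (M : Ideal D) : Prop :=
  IsQuasiIdeal t M ∧ ∀ J : Ideal D, IsQuasiIdeal t J → M ≤ J → M = J

/-- The localization `E·D_M` of a submodule `E` of `K` at (the complement of) an ideal `M`. -/
def locAt (M : Ideal D) (E : Submodule D K) : Submodule D K where
  carrier := {x : K | ∃ s ∈ Submonoid.closure ((M : Set D)ᶜ), s • x ∈ E}
  add_mem' := by
    rintro x y ⟨s, hs, hsx⟩ ⟨t, ht, hty⟩
    refine ⟨s * t, mul_mem hs ht, ?_⟩
    have h1 : (s * t) • x ∈ E := by rw [mul_comm, mul_smul]; exact E.smul_mem t hsx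
    have h2 : (s * t) • y ∈ E := by rw [mul_smul]; exact E.smul_mem s hty
    rw [smul_add]; exact E.add_mem h1 h2
  zero_mem' := ⟨1, Submonoid.one_mem _, by simp⟩
  smul_mem' := by
    rintro c x ⟨s, hs, hsx⟩
    exact ⟨s, hs, by rw [smul_comm]; exact E.smul_mem c hsx⟩

/-- The spectral semistar operation `⋆̃` associated to `⋆`, defined by
`E^⋆̃ = ⋂ { E·D_M : M quasi-`⋆_f`-maximal }`. -/
def tildeStar (s : SemistarOp D K) : Submodule D K → Submodule D K :=
  fun E => ⨅ M ∈ {M : Ideal D | IsQuasiMaximal (finStar s.star) M}, locAt M E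

/-- The localizing system `F^⋆` of ideals `I` with `I^⋆ = D^⋆`. -/
def starLS (s : SemistarOp D K) : Set (Ideal D) :=
  {I : Ideal D | I ≠ ⊥ ∧ s.star (idealToK I) = s.star 1}

/-- The stable semistar operation `⋆̄` associated to `⋆`:
`E^⋆̄ = ⋃ {(E : J) : J ∈ F^⋆}`. -/
def barStar (s : SemistarOp D K) : Submodule D K → Submodule D K :=
  fun E => ⨆ J ∈ starLS s, E / idealToK J

/-- `I` is `⋆`-invertible: `(I·I⁻¹)^⋆ = D^⋆`. -/
def IsStarInvertible (t : Submodule D K → Submodule D K) (I : Submodule D K) : Prop :=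
  t (I * (1 / I)) = t 1

/-- `D` is a `⋆`-domain: every nonzero finitely generated `D`-submodule of `K`
is `⋆`-invertible. -/
def IsStarDomain (t : Submodule D K → Submodule D K) : Prop :=
  ∀ I : Submodule D K, I ≠ ⊥ → I.FG → IsStarInvertible t I

/-- `D` is a Prüfer `⋆`-multiplication domain: every nonzero finitely generated
ideal of `D` is `⋆_f`-invertible. -/
def IsPMD (t : Submodule D K → Submodule D K) : Prop :=
  ∀ I : Submodule D K, I ≠ ⊥ → I.FG → I ≤ 1 → IsStarInvertible (finStar t) I

/-- `D` is a P⋆MD for the semistar operation `s`. -/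
abbrev IsPStarMD (s : SemistarOp D K) : Prop := IsPMD s.star

/-- Equality of two semistar operations (as maps on nonzero submodules):
`D` is a `(∗₁, ∗₂)`-domain. -/
def StarEq (t₁ t₂ : Submodule D K → Submodule D K) : Prop :=
  ∀ E : Submodule D K, E ≠ ⊥ → t₁ E = t₂ E

/-- `⋆` is a.b. -/
def IsAB (t : Submodule D K → Submodule D K) : Prop :=
  ∀ E : Submodule D K, E ≠ ⊥ → E.FG → ∀ F G : Submodule D K, F ≠ ⊥ → G ≠ ⊥ →
    t (E * F) ≤ t (E * G) → t F ≤ t G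

/-- `⋆` is e.a.b. -/
def IsEAB (t : Submodule D K → Submodule D K) : Prop :=
  ∀ E F G : Submodule D K, E ≠ ⊥ → E.FG → F ≠ ⊥ → F.FG → G ≠ ⊥ → G.FG →
    t (E * F) ≤ t (E * G) → t F ≤ t G

/-- `D` is quasi-`⋆`-integrally closed: `D^⋆ = ⋃ {(F^⋆ : F^⋆) : F ∈ f(D)}`. -/
def IsQuasiStarIntegrallyClosed (t : Submodule D K → Submodule D K) : Prop :=
  (t 1 : Set K) = ⋃ F ∈ {F : Submodule D K | F ≠ ⊥ ∧ F.FG}, ((t F / t F : Submodule D K) : Set K)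

/-- The submodule `S` of `K` is integrally closed in `K`. -/
def IsIntegrallyClosedIn (S : Submodule D K) : Prop :=
  ∀ x : K, (∃ p : Polynomial K, p.Monic ∧ (∀ i, p.coeff i ∈ S) ∧ Polynomial.eval x p = 0) → x ∈ S

/-- `D` is `⋆`-Noetherian: ACC on quasi-`⋆`-ideals. -/
def IsStarNoetherian (t : Submodule D K → Submodule D K) : Prop :=
  ∀ c : ℕ → Ideal D, (∀ n, IsQuasiIdeal t (c n)) → Monotone c →
    ∃ n, ∀ m, n ≤ m → c m = c n

/-- `D` is `⋆`-extracoherent. -/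
def IsExtraCoherent (t : Submodule D K → Submodule D K) : Prop :=
  ∀ E F : Submodule D K, E ≠ ⊥ → E.FG → F ≠ ⊥ → F.FG → E ⊓ F ≠ ⊥ →
    ∃ J : Submodule D K, J ≠ ⊥ ∧ J.FG ∧ J ≤ E ⊓ F ∧ t J = t E ⊓ t F

/-- `D` is truly `⋆`-coherent. -/
def IsTrulyCoherent (t : Submodule D K → Submodule D K) : Prop :=
  ∀ E F : Submodule D K, E ≠ ⊥ → E.FG → F ≠ ⊥ → F.FG → E ⊓ F ≠ ⊥ →
    ∃ J : Submodule D K, J ≠ ⊥ ∧ J.FG ∧ t J = t (E ⊓ F)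

/-- `D` is `⋆`-coherent. -/
def IsCoherent (t : Submodule D K → Submodule D K) : Prop :=
  ∀ E F : Submodule D K, E ≠ ⊥ → E.FG → F ≠ ⊥ → F.FG → E ⊓ F ≠ ⊥ →
    ∃ J : Submodule D K, J ≠ ⊥ ∧ J.FG ∧ t J = t E ⊓ t F

/-- `D` is `⋆`-quasi-coherent. -/
def IsQuasiCoherent (t : Submodule D K → Submodule D K) : Prop :=
  ∀ F : Submodule D K, F ≠ ⊥ → F.FG →
    ∃ G : Submodule D K, G ≠ ⊥ ∧ G.FG ∧ t ((1 : Submodule D K) / F) = t G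

/-- `D` is an `H(⋆)`-domain. -/
def IsHDomain (t : Submodule D K → Submodule D K) : Prop :=
  ∀ I : Ideal D, I ≠ ⊥ → t (idealToK I) = t 1 →
    ∃ J : Ideal D, J ≠ ⊥ ∧ J.FG ∧ J ≤ I ∧ t (idealToK J) = t 1

/-- `D` is an `I(⋆)`-domain. -/
def IsIDomain (s : SemistarOp D K) : Prop :=
  ∀ I : Submodule D K, I ≠ ⊥ → I.FG → I ≤ 1 →
    (IsStarInvertible s.star I ↔ IsStarInvertible (finStar s.star) I)



section AuxLemmas

lemma inf_ne_bot' [IsDomain D] [IsFractionRing D K] {E F : Submodule D K}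
    (hE : E ≠ ⊥) (hF : F ≠ ⊥) : E ⊓ F ≠ ⊥ := by
  obtain ⟨x, hxE, hx0⟩ := Submodule.exists_mem_ne_zero_of_ne_bot hE
  obtain ⟨y, hyF, hy0⟩ := Submodule.exists_mem_ne_zero_of_ne_bot hF
  obtain ⟨⟨a, b⟩, hab⟩ := IsLocalization.surj (nonZeroDivisors D) (x / y)
  have hb : algebraMap D K (b : D) ≠ 0 :=
    IsFractionRing.to_map_ne_zero_of_mem_nonZeroDivisors b.2
  have key : (b : D) • x = a • y := by
    have := hab
    field_simp at this
    rw [Algebra.smul_def, Algebra.smul_def]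
    rw [mul_comm]; exact this.trans (mul_comm _ _)
  rw [Submodule.ne_bot_iff]
  refine ⟨(b : D) • x, ⟨E.smul_mem _ hxE, key ▸ F.smul_mem _ hyF⟩, ?_⟩
  rw [Algebra.smul_def]
  exact mul_ne_zero hb hx0

lemma one_ne_bot' : (1 : Submodule D K) ≠ ⊥ := by
  rw [Submodule.one_eq_span]
  simp [Submodule.span_eq_bot]

lemma le_mul_T {E : Submodule D K} (T : Subalgebra D K) :
    E ≤ E * Subalgebra.toSubmodule T := by
  conv_lhs => rw [← mul_one E]
  exact mul_le_mul_right (Submodule.one_le.mpr T.one_mem) E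

lemma star_ne_bot (s : SemistarOp D K) {E : Submodule D K} (hE : E ≠ ⊥) : s.star E ≠ ⊥ :=
  fun h => hE (le_bot_iff.mp (h ▸ s.le_star E hE))

lemma star_mul_T (s : SemistarOp D K) (T : Subalgebra D K)
    (hT : Subalgebra.toSubmodule T = s.star 1) {E : Submodule D K} (hE : E ≠ ⊥) :
    s.star (E * Subalgebra.toSubmodule T) = s.star E := by
  have hET : E * Subalgebra.toSubmodule T ≠ ⊥ := fun h => hE (le_bot_iff.mp (h ▸ le_mul_T T))
  apply le_antisymm
  · have h1 : E * Subalgebra.toSubmodule T ≤ s.star E := by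
      rw [hT]
      rw [Submodule.mul_le]
      intro m hm n hn
      rcases eq_or_ne m 0 with rfl | hm0
      · simpa using (s.star E).zero_mem
      · have h2 : m * n ∈ span D {m} * s.star 1 :=
          Submodule.mul_mem_mul (Submodule.mem_span_singleton_self m) hn
        rw [← s.star_smul_mul m hm0 1 one_ne_bot', mul_one] at h2
        exact s.star_mono _ _ (by simp [Submodule.span_eq_bot, hm0]) hE
          ((Submodule.span_singleton_le_iff_mem m E).mpr hm) h2
    have := s.star_mono _ _ hET (star_ne_bot s hE) h1
    rwa [s.star_star E hE] at this
  · exact s.star_mono _ _ hE hET (le_mul_T T)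

lemma restrict_span (T : Subalgebra D K) (S : Set K) :
    restrictScalars D (span ↥T S) = span D S * Subalgebra.toSubmodule T := by
  apply le_antisymm
  · intro x hx
    change x ∈ span ↥T S at hx
    induction hx using Submodule.span_induction with
    | mem y hy =>
        rw [← mul_one y]
        exact Submodule.mul_mem_mul (Submodule.subset_span hy) T.one_mem
    | zero => exact zero_mem _
    | add y z _ _ hy hz => exact add_mem hy hz
    | smul t y _ hy =>
        have : (t : K) * y ∈ span D S * Subalgebra.toSubmodule T := by
          refine Submodule.mul_induction_on hy (fun m hm n hn => ?_) (fun a b ha hb => ?_)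
          · have : (t : K) * (m * n) = m * ((t : K) * n) := by ring
            rw [this]
            exact Submodule.mul_mem_mul hm (T.mul_mem t.2 hn)
          · rw [mul_add]; exact add_mem ha hb
        rw [Subalgebra.smul_def, smul_eq_mul]; exact this
  · rw [Submodule.mul_le]
    intro m hm n hn
    have hmem : m ∈ restrictScalars D (span ↥T S) := by
      have : S ⊆ (restrictScalars D (span ↥T S) : Set K) := fun z hz => Submodule.subset_span hz
      exact Submodule.span_le.mpr this hm
    have : (⟨n, hn⟩ : T) • m ∈ span ↥T S := Submodule.smul_mem _ _ hmem
    have heq : (⟨n, hn⟩ : T) • m = m * n := by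
      rw [Subalgebra.smul_def, smul_eq_mul, mul_comm]
    rwa [heq] at this

lemma exists_base (T : Subalgebra D K) {E : Submodule ↥T K} (hE : E ≠ ⊥) (hfg : E.FG) :
    ∃ E₀ : Submodule D K, E₀ ≠ ⊥ ∧ E₀.FG ∧
      Submodule.restrictScalars D E = E₀ * Subalgebra.toSubmodule T := by
  obtain ⟨S, hS⟩ := hfg
  refine ⟨span D (S : Set K), ?_, Submodule.fg_span S.finite_toSet, ?_⟩
  · intro h
    apply hE
    rw [← hS, Submodule.span_eq_bot]
    exact Submodule.span_eq_bot.mp h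
  · rw [← hS, restrict_span]

end AuxLemmas

theorem statement11 {D K : Type*} [CommRing D] [IsDomain D] [Field K] [Algebra D K]
    [IsFractionRing D K] (s : SemistarOp D K)
    (T : Subalgebra D K) (hT : Subalgebra.toSubmodule T = s.star 1)
    (sIota : SemistarOp ↥T K)
    (hcompat : ∀ E : Submodule ↥T K, E ≠ ⊥ →
      Submodule.restrictScalars D (sIota.star E) = s.star (Submodule.restrictScalars D E)) :
    (IsCoherent s.star ↔ IsCoherent sIota.star) ∧
    (IsExtraCoherent s.star → IsExtraCoherent sIota.star) := by
  -- generic ingredients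
  have hrne : ∀ (E : Submodule ↥T K), E ≠ ⊥ → Submodule.restrictScalars D E ≠ ⊥ :=
    fun E hE h => hE (by rwa [Submodule.restrictScalars_eq_bot_iff] at h)
  -- star of restriction of a fg nonzero T-submodule equals star of any D-base
  have key : ∀ (E : Submodule ↥T K) (E₀ : Submodule D K), E ≠ ⊥ → E₀ ≠ ⊥ →
      Submodule.restrictScalars D E = E₀ * Subalgebra.toSubmodule T →
      Submodule.restrictScalars D (sIota.star E) = s.star E₀ := by
    intro E E₀ hE hE₀ hres
    rw [hcompat E hE, hres, star_mul_T s T hT hE₀]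
  constructor
  · constructor
    · -- D coherent → T coherent
      intro hD E F hE hEfg hF hFfg _
      obtain ⟨E₀, hE₀, hE₀fg, hEres⟩ := exists_base T hE hEfg
      obtain ⟨F₀, hF₀, hF₀fg, hFres⟩ := exists_base T hF hFfg
      obtain ⟨J, hJ, hJfg, hJstar⟩ :=
        hD E₀ F₀ hE₀ hE₀fg hF₀ hF₀fg (inf_ne_bot' hE₀ hF₀)
      obtain ⟨SJ, hSJ⟩ := hJfg
      set J' : Submodule ↥T K := span ↥T (SJ : Set K) with hJ'def
      have hJres : Submodule.restrictScalars D J' = J * Subalgebra.toSubmodule T := by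
        rw [hJ'def, restrict_span, hSJ]
      have hJ'ne : J' ≠ ⊥ := by
        intro h
        apply hJ
        have : Submodule.restrictScalars D J' = ⊥ := by rw [h]; rfl
        rw [hJres] at this
        exact le_bot_iff.mp (this ▸ le_mul_T T)
      refine ⟨J', hJ'ne, Submodule.fg_span SJ.finite_toSet, ?_⟩
      apply Submodule.restrictScalars_injective D
      rw [key J' J hJ'ne hJ hJres, hJstar]
      rw [← key E E₀ hE hE₀ hEres, ← key F F₀ hF hF₀ hFres]
      rfl
    · -- T coherent → D coherent
      intro hTc E F hE hEfg hF hFfg _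
      obtain ⟨SE, hSE⟩ := hEfg
      obtain ⟨SF, hSF⟩ := hFfg
      set E' : Submodule ↥T K := span ↥T (SE : Set K) with hE'def
      set F' : Submodule ↥T K := span ↥T (SF : Set K) with hF'def
      have hEres : Submodule.restrictScalars D E' = E * Subalgebra.toSubmodule T := by
        rw [hE'def, restrict_span, hSE]
      have hFres : Submodule.restrictScalars D F' = F * Subalgebra.toSubmodule T := by
        rw [hF'def, restrict_span, hSF]
      have hE' : E' ≠ ⊥ := by
        intro h
        apply hE
        have : Submodule.restrictScalars D E' = ⊥ := by rw [h]; rfl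
        rw [hEres] at this
        exact le_bot_iff.mp (this ▸ le_mul_T T)
      have hF' : F' ≠ ⊥ := by
        intro h
        apply hF
        have : Submodule.restrictScalars D F' = ⊥ := by rw [h]; rfl
        rw [hFres] at this
        exact le_bot_iff.mp (this ▸ le_mul_T T)
      have hEF' : E' ⊓ F' ≠ ⊥ := by
        intro h
        have : Submodule.restrictScalars D E' ⊓ Submodule.restrictScalars D F' = ⊥ := by
          have : Submodule.restrictScalars D (E' ⊓ F') = ⊥ := by rw [h]; rfl
          exact this
        exact inf_ne_bot' (hrne E' hE') (hrne F' hF') this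
      obtain ⟨J', hJ', hJ'fg, hJ'star⟩ :=
        hTc E' F' hE' (Submodule.fg_span SE.finite_toSet) hF' (Submodule.fg_span SF.finite_toSet)
          hEF'
      obtain ⟨SJ, hSJ⟩ := hJ'fg
      refine ⟨span D (SJ : Set K), ?_, Submodule.fg_span SJ.finite_toSet, ?_⟩
      · intro h
        apply hJ'
        rw [← hSJ, Submodule.span_eq_bot]
        exact Submodule.span_eq_bot.mp h
      · have hJ0 : span D (SJ : Set K) ≠ ⊥ := by
          intro h
          apply hJ'
          rw [← hSJ, Submodule.span_eq_bot]
          exact Submodule.span_eq_bot.mp h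
        have hJres : Submodule.restrictScalars D J' = span D (SJ : Set K) *
            Subalgebra.toSubmodule T := by rw [← hSJ, restrict_span]
        have h1 := key J' (span D (SJ : Set K)) hJ' hJ0 hJres
        have h2 := key E' E hE' (fun h => hE h) hEres
        have h3 := key F' F hF' (fun h => hF h) hFres
        rw [hJ'star] at h1
        rw [← h1, ← h2, ← h3]
        rfl
  · -- extracoherence transfer
    intro hD E F hE hEfg hF hFfg _
    obtain ⟨SE, hSE⟩ := hEfg
    obtain ⟨SF, hSF⟩ := hFfg
    set E₀ : Submodule D K := span D (SE : Set K) with hE₀def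
    set F₀ : Submodule D K := span D (SF : Set K) with hF₀def
    have hEres : Submodule.restrictScalars D E = E₀ * Subalgebra.toSubmodule T := by
      rw [← hSE, restrict_span, hE₀def]
    have hFres : Submodule.restrictScalars D F = F₀ * Subalgebra.toSubmodule T := by
      rw [← hSF, restrict_span, hF₀def]
    have hE₀ : E₀ ≠ ⊥ := by
      intro h
      apply hE
      rw [← hSE, Submodule.span_eq_bot]
      exact Submodule.span_eq_bot.mp (hE₀def ▸ h)
    have hF₀ : F₀ ≠ ⊥ := by
      intro h
      apply hF
      rw [← hSF, Submodule.span_eq_bot]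
      exact Submodule.span_eq_bot.mp (hF₀def ▸ h)
    obtain ⟨J, hJ, hJfg, hJle, hJstar⟩ :=
      hD E₀ F₀ hE₀ (Submodule.fg_span SE.finite_toSet) hF₀ (Submodule.fg_span SF.finite_toSet)
        (inf_ne_bot' hE₀ hF₀)
    obtain ⟨SJ, hSJ⟩ := hJfg
    set J' : Submodule ↥T K := span ↥T (SJ : Set K) with hJ'def
    have hJres : Submodule.restrictScalars D J' = J * Subalgebra.toSubmodule T := by
      rw [hJ'def, restrict_span, hSJ]
    have hJ'ne : J' ≠ ⊥ := by
      intro h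
      apply hJ
      have : Submodule.restrictScalars D J' = ⊥ := by rw [h]; rfl
      rw [hJres] at this
      exact le_bot_iff.mp (this ▸ le_mul_T T)
    refine ⟨J', hJ'ne, Submodule.fg_span SJ.finite_toSet, ?_, ?_⟩
    · have hle : Submodule.restrictScalars D J' ≤
          Submodule.restrictScalars D E ⊓ Submodule.restrictScalars D F := by
        rw [hJres, hEres, hFres]
        exact le_inf (mul_le_mul_left (le_trans hJle inf_le_left) _)
          (mul_le_mul_left (le_trans hJle inf_le_right) _)
      exact hle
    · apply Submodule.restrictScalars_injective D
      rw [key J' J hJ'ne hJ hJres, hJstar]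
      rw [← key E E₀ hE hE₀ hEres, ← key F F₀ hF hF₀ hFres]
      rfl

end Semistar
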